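/- Let G be a finite group, Z, Z⁺, Z⁻ ⊆ G non-empty sets and X a symmetric neighbourhood of the identity such that Z⁻X ⊆ Z, ZX⁻¹ ⊆ Z⁺, and |Z⁺ \ Z⁻| ≤ η|Z|. Then for any bounded f : G → ℂ and any x ∈ X and t ∈ G, |f ∗ m_Z(tx) − f ∗ m_Z(t)| ≤ η ‖f‖_∞, where m_Z is the uniform probability measure on Z. -/

import Mathlib

open scoped BigOperators Pointwise

/-- Convolution of `f` with the uniform probability measure on a finite set `Z`:
`f ∗ m_Z (t) = (1/|Z|) ∑_{z ∈ Z} f(t z⁻¹)`. -/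
noncomputable def convM {G : Type*} [Group G] [DecidableEq G] (f : G → ℂ)
    (Z : Finset G) : G → ℂ :=
  fun t => (∑ z ∈ Z, f (t * z⁻¹)) / (Z.card : ℂ)

/-- If `(Z, X; Z⁺, Z⁻)` is `η`-closed then `f ∗ m_Z` is `η‖f‖_∞`-invariant under
right translation by elements of `X`. -/
theorem convM_approx_invariant {G : Type*} [Group G] [Fintype G] [DecidableEq G]
    (Z Zp Zm X : Finset G) (η : ℝ) (hZ : Z.Nonempty)
    (hXone : (1 : G) ∈ X) (hXsymm : X⁻¹ = X)
    (h1 : Zm * X ⊆ Z) (h2 : Z * X⁻¹ ⊆ Zp)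
    (h3 : ((Zp \ Zm).card : ℝ) ≤ η * Z.card)
    (f : G → ℂ) (M : ℝ) (hM : ∀ y : G, ‖f y‖ ≤ M)
    (x : G) (hx : x ∈ X) (t : G) :
    ‖convM f Z (t * x) - convM f Z t‖ ≤ η * M := by
  have hZ0 : 0 < (Z.card : ℝ) := by exact_mod_cast Finset.card_pos.mpr hZ
  have hM0 : 0 ≤ M := le_trans (norm_nonneg _) (hM 1)
  set Z' : Finset G := Z.image (· * x⁻¹) with hZ'
  have hxi : x⁻¹ ∈ X⁻¹ := Finset.inv_mem_inv hx
  have hone : (1 : G) ∈ X⁻¹ := by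
    have := Finset.inv_mem_inv hXone
    simpa using this
  have hsum : ∑ z ∈ Z, f (t * x * z⁻¹) = ∑ w ∈ Z', f (t * w⁻¹) := by
    rw [hZ', Finset.sum_image (fun a _ b _ h => mul_left_injective x⁻¹ h)]
    refine Finset.sum_congr rfl fun z hz => ?_
    rw [mul_inv_rev, inv_inv, ← mul_assoc]
  have hA : Z' \ Z ⊆ Zp \ Zm := by
    intro w hw
    rcases Finset.mem_sdiff.mp hw with ⟨hw1, hw2⟩
    rcases Finset.mem_image.mp hw1 with ⟨z, hz, rfl⟩
    refine Finset.mem_sdiff.mpr ⟨h2 (Finset.mul_mem_mul hz hxi), fun hm => ?_⟩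
    exact hw2 (by simpa using h1 (Finset.mul_mem_mul hm hXone))
  have hB : Z \ Z' ⊆ Zp \ Zm := by
    intro w hw
    rcases Finset.mem_sdiff.mp hw with ⟨hw1, hw2⟩
    refine Finset.mem_sdiff.mpr ⟨by simpa using h2 (Finset.mul_mem_mul hw1 hone),
      fun hm => ?_⟩
    have hwx : w * x ∈ Z := h1 (Finset.mul_mem_mul hm hx)
    exact hw2 (Finset.mem_image.mpr ⟨w * x, hwx, by simp⟩)
  have hdisj : Disjoint (Z' \ Z) (Z \ Z') := disjoint_sdiff_sdiff
  have hcards : ((Z' \ Z).card : ℝ) + ((Z \ Z').card : ℝ) ≤ ((Zp \ Zm).card : ℝ) := by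
    have := Finset.card_le_card (Finset.union_subset hA hB)
    rw [Finset.card_union_of_disjoint hdisj] at this
    exact_mod_cast this
  have hdiff : convM f Z (t * x) - convM f Z t =
      ((∑ w ∈ Z' \ Z, f (t * w⁻¹)) - ∑ w ∈ Z \ Z', f (t * w⁻¹)) / (Z.card : ℂ) := by
    unfold convM
    rw [hsum, div_sub_div_same]
    congr 1
    rw [← Finset.sum_inter_add_sum_sdiff Z' Z (fun w => f (t * w⁻¹)),
        ← Finset.sum_inter_add_sum_sdiff Z Z' (fun w => f (t * w⁻¹)),
        Finset.inter_comm Z Z']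
    ring
  have hbound : ∀ (S : Finset G), ‖∑ w ∈ S, f (t * w⁻¹)‖ ≤ S.card * M := by
    intro S
    calc ‖∑ w ∈ S, f (t * w⁻¹)‖ ≤ ∑ w ∈ S, ‖f (t * w⁻¹)‖ :=
          norm_sum_le _ _
      _ ≤ ∑ _w ∈ S, M := Finset.sum_le_sum fun w _ => hM _
      _ = S.card * M := by rw [Finset.sum_const, nsmul_eq_mul]
  rw [hdiff, norm_div]
  have habs : ‖(Z.card : ℂ)‖ = (Z.card : ℝ) := by
    simp
  rw [habs]
  rw [div_le_iff₀ hZ0]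
  calc ‖(∑ w ∈ Z' \ Z, f (t * w⁻¹)) - ∑ w ∈ Z \ Z', f (t * w⁻¹)‖
      ≤ ‖∑ w ∈ Z' \ Z, f (t * w⁻¹)‖ +
        ‖∑ w ∈ Z \ Z', f (t * w⁻¹)‖ := by simpa [sub_eq_add_neg] using norm_add_le _ (-(∑ w ∈ Z \ Z', f (t * w⁻¹)))
    _ ≤ ((Z' \ Z).card : ℝ) * M + ((Z \ Z').card : ℝ) * M :=
        add_le_add (hbound _) (hbound _)
    _ = (((Z' \ Z).card : ℝ) + ((Z \ Z').card : ℝ)) * M := by ring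
    _ ≤ ((Zp \ Zm).card : ℝ) * M := mul_le_mul_of_nonneg_right hcards hM0
    _ ≤ η * Z.card * M := mul_le_mul_of_nonneg_right h3 hM0
    _ = η * M * Z.card := by ring
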